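/- Let E, A ∈ ℂ^{n×n}, B ∈ ℂ^{n×m}, C ∈ ℂ^{m×n}, D ∈ ℂ^{m×m}, and suppose X ∈ ℂ^{n×n} is a Hermitian positive definite solution of the discrete-time scattering KYP inequality (d-sKYP). Then ker(I_m + D) ⊆ ker B ∩ ker C^H; that is, every v ∈ ℂ^m with D v = −v satisfies B v = 0 and C^H v = 0. -/

import Mathlib

open Matrix
open scoped ComplexOrder

/-- For a positive definite solution `X` of the discrete-time scattering KYP
inequality (d-sKYP), `ker(I + D) ⊆ ker B ∩ ker Cᴴ`. -/
theorem dsKYP_ker_inclusion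
    (n m : ℕ)
    (E A : Matrix (Fin n) (Fin n) ℂ)
    (B : Matrix (Fin n) (Fin m) ℂ)
    (C : Matrix (Fin m) (Fin n) ℂ)
    (D : Matrix (Fin m) (Fin m) ℂ)
    (X : Matrix (Fin n) (Fin n) ℂ)
    (hX : X.PosDef)
    (hKYP : (Matrix.fromBlocks
        (-(Aᴴ * X * A) + Eᴴ * X * E - Cᴴ * C) (-(Aᴴ * X * B) - Cᴴ * D)
        (-(Dᴴ * C) - Bᴴ * X * A) (1 - Dᴴ * D - Bᴴ * X * B)).PosSemidef) :
    ∀ v : Fin m → ℂ, D *ᵥ v = -v → B *ᵥ v = 0 ∧ Cᴴ *ᵥ v = 0 := by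
  intro v hv
  set M := Matrix.fromBlocks
        (-(Aᴴ * X * A) + Eᴴ * X * E - Cᴴ * C) (-(Aᴴ * X * B) - Cᴴ * D)
        (-(Dᴴ * C) - Bᴴ * X * A) (1 - Dᴴ * D - Bᴴ * X * B) with hM
  set w : Fin n ⊕ Fin m → ℂ := Sum.elim (0 : Fin n → ℂ) v with hw
  have hsw : star w = Sum.elim (0 : Fin n → ℂ) (star v) := by
    funext i; cases i <;> simp [hw, Pi.star_apply]
  -- the quadratic form at w
  have hMw : M *ᵥ w = Sum.elim ((-(Aᴴ * X * B) - Cᴴ * D) *ᵥ v)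
      ((1 - Dᴴ * D - Bᴴ * X * B) *ᵥ v) := by
    rw [hM, hw, fromBlocks_mulVec]
    simp
  -- star v ⬝ᵥ (DᴴD) v = star v ⬝ᵥ v
  have hDD : star v ⬝ᵥ (Dᴴ * D) *ᵥ v = star v ⬝ᵥ v := by
    rw [← mulVec_mulVec, hv, mulVec_neg, dotProduct_neg, dotProduct_mulVec,
      vecMul_conjTranspose, star_star, hv]
    simp
  have hqform : star w ⬝ᵥ M *ᵥ w = -(star (B *ᵥ v) ⬝ᵥ X *ᵥ (B *ᵥ v)) := by
    rw [hMw, hsw, sumElim_dotProduct_sumElim, zero_dotProduct, zero_add]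
    rw [sub_mulVec, sub_mulVec, dotProduct_sub, dotProduct_sub, hDD, one_mulVec,
      sub_self, zero_sub, ← mulVec_mulVec, ← mulVec_mulVec, dotProduct_mulVec,
      vecMul_conjTranspose, star_star]
  have hBv : B *ᵥ v = 0 := by
    by_contra h
    have h1 : 0 < star (B *ᵥ v) ⬝ᵥ X *ᵥ (B *ᵥ v) := hX.dotProduct_mulVec_pos h
    have h2 : 0 ≤ star w ⬝ᵥ M *ᵥ w := hKYP.dotProduct_mulVec_nonneg w
    rw [hqform] at h2
    exact h1.not_ge (neg_nonneg.mp h2)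
  have hzero : star w ⬝ᵥ M *ᵥ w = 0 := by rw [hqform, hBv]; simp
  have hker := (hKYP.dotProduct_mulVec_zero_iff w).mp hzero
  rw [hMw] at hker
  have htop : (-(Aᴴ * X * B) - Cᴴ * D) *ᵥ v = 0 := by
    funext i
    have := congrFun hker (Sum.inl i)
    simpa using this
  refine ⟨hBv, ?_⟩
  rw [sub_mulVec, neg_mulVec, ← mulVec_mulVec, hBv, mulVec_zero, neg_zero, zero_sub,
    ← mulVec_mulVec, hv, mulVec_neg, neg_neg] at htop
  exact htop
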